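/- If M is an H-supplemented module satisfying condition (D2), then every direct summand of M is H-supplemented. -/

import Mathlib

universe u v

/-- `N` is a small (superfluous) submodule of `M`. -/
def SmallSub (R : Type v) [Ring R] {M : Type u} [AddCommGroup M] [Module R M]
    (N : Submodule R M) : Prop :=
  ∀ X : Submodule R M, N ⊔ X = ⊤ → X = ⊤

/-- `D` is a direct summand of `M`. -/
def IsDirectSummand (R : Type v) [Ring R] {M : Type u} [AddCommGroup M] [Module R M]
    (D : Submodule R M) : Prop :=
  ∃ D' : Submodule R M, IsCompl D D'

/-- `M` is H-supplemented: for every submodule `X` there is a direct summand `D`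
with `(X+D)/D ≪ M/D` and `(X+D)/X ≪ M/X`. -/
def HSupplemented (R : Type v) [Ring R] (M : Type u) [AddCommGroup M] [Module R M] : Prop :=
  ∀ X : Submodule R M, ∃ D : Submodule R M, IsDirectSummand R D ∧
    SmallSub R ((X ⊔ D).map D.mkQ) ∧ SmallSub R ((X ⊔ D).map X.mkQ)

/-- Condition (D3). -/
def CondD3 (R : Type v) [Ring R] (M : Type u) [AddCommGroup M] [Module R M] : Prop :=
  ∀ K L : Submodule R M, IsDirectSummand R K → IsDirectSummand R L → K ⊔ L = ⊤ →
    IsDirectSummand R (K ⊓ L)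

/-- Condition (D2). -/
def CondD2 (R : Type v) [Ring R] (M : Type u) [AddCommGroup M] [Module R M] : Prop :=
  ∀ N : Submodule R M,
    (∃ D : Submodule R M, IsDirectSummand R D ∧ Nonempty ((M ⧸ N) ≃ₗ[R] ↥D)) →
      IsDirectSummand R N

section Aux

variable {R : Type v} [Ring R] {M : Type u} [AddCommGroup M] [Module R M]

lemma smallSub_map_mkQ {p S : Submodule R M} (hp : p ≤ S) :
    SmallSub R (S.map p.mkQ) ↔ ∀ Y : Submodule R M, S ⊔ Y = ⊤ → p ⊔ Y = ⊤ := by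
  constructor
  · intro h Y hY
    have h1 : S.map p.mkQ ⊔ (p ⊔ Y).map p.mkQ = ⊤ := by
      rw [← Submodule.map_sup]
      have hS : S ⊔ (p ⊔ Y) = ⊤ := by
        rw [← sup_assoc, sup_eq_left.mpr hp, hY]
      rw [hS, Submodule.map_top, Submodule.range_mkQ]
    have h2 : (p ⊔ Y).map p.mkQ = ⊤ := h _ h1
    rw [Submodule.map_mkQ_eq_top] at h2
    rwa [← sup_assoc, sup_idem] at h2
  · intro h q hq
    set Y := q.comap p.mkQ with hYdef
    have hmapY : Y.map p.mkQ = q := by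
      rw [Submodule.map_comap_eq, Submodule.range_mkQ, top_inf_eq]
    have hSY : S ⊔ Y = ⊤ := by
      have h3 : (S ⊔ Y).map p.mkQ = ⊤ := by rw [Submodule.map_sup, hmapY, hq]
      rw [Submodule.map_mkQ_eq_top] at h3
      rwa [sup_eq_right.mpr (le_trans hp le_sup_left)] at h3
    have hpY : p ⊔ Y = ⊤ := h Y hSY
    have h4 : (p ⊔ Y).map p.mkQ = ⊤ := by rw [hpY, Submodule.map_top, Submodule.range_mkQ]
    rwa [Submodule.map_sup, Submodule.mkQ_map_self, bot_sup_eq, hmapY] at h4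

lemma hsupp_iff_beta : HSupplemented R M ↔
    ∀ X : Submodule R M, ∃ D : Submodule R M, IsDirectSummand R D ∧
      ∀ Y : Submodule R M, (X ⊔ Y = ⊤ ↔ D ⊔ Y = ⊤) := by
  constructor
  · intro h X
    obtain ⟨D, hD, h1, h2⟩ := h X
    rw [smallSub_map_mkQ le_sup_right] at h1
    rw [smallSub_map_mkQ le_sup_left] at h2
    refine ⟨D, hD, fun Y => ⟨fun hy => h1 Y ?_, fun hy => h2 Y ?_⟩⟩
    · exact top_unique (hy ▸ sup_le_sup_right le_sup_left Y)
    · exact top_unique (hy ▸ sup_le_sup_right le_sup_right Y)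
  · intro h X
    obtain ⟨D, hD, hbeta⟩ := h X
    refine ⟨D, hD, ?_, ?_⟩
    · rw [smallSub_map_mkQ le_sup_right]
      intro Y hY
      have h5 := (hbeta (D ⊔ Y)).mp (by rwa [← sup_assoc])
      rwa [← sup_assoc, sup_idem] at h5
    · rw [smallSub_map_mkQ le_sup_left]
      intro Y hY
      have h' : D ⊔ (X ⊔ Y) = ⊤ := by
        rw [sup_left_comm, ← sup_assoc]
        exact hY
      have h5 := (hbeta (X ⊔ Y)).mpr h'
      rwa [← sup_assoc, sup_idem] at h5

lemma condD2_to_condD3 (hD2 : CondD2 R M) : CondD3 R M := by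
  rintro K L ⟨K', hK⟩ ⟨L', hL⟩ hKL
  -- the projection M → K' with kernel L' ⊔ (K ⊓ L)
  have hmaps : ∃ f : M →ₗ[R] K', Function.Surjective f ∧ LinearMap.ker f = L' ⊔ (K ⊓ L) := by
    refine ⟨(K'.projectionOnto K hK.symm) ∘ₗ
      (L.subtype ∘ₗ (L.projectionOnto L' hL)), ?_, ?_⟩
    · intro k'
      have hk'mem : (k' : M) ∈ K ⊔ L := hKL ▸ Submodule.mem_top
      obtain ⟨k, hk, l, hl, hkl⟩ := Submodule.mem_sup.mp hk'mem
      refine ⟨l, ?_⟩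
      have h1 : L.projectionOnto L' hL l = ⟨l, hl⟩ :=
        Submodule.projectionOnto_apply_left hL ⟨l, hl⟩
      have hldec : l = (k' : M) - k := by rw [← hkl]; abel
      calc (K'.projectionOnto K hK.symm) ((L.subtype ∘ₗ (L.projectionOnto L' hL)) l)
          = (K'.projectionOnto K hK.symm) l := by rw [LinearMap.comp_apply, h1]; rfl
        _ = k' := by
            rw [hldec, map_sub, Submodule.projectionOnto_apply_left hK.symm k',
              Submodule.projectionOnto_apply_of_mem_right hK.symm hk, sub_zero]
    · apply le_antisymm
      · intro m hm
        rw [LinearMap.mem_ker, LinearMap.comp_apply, LinearMap.comp_apply,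
          Submodule.coe_subtype, Submodule.projectionOnto_apply_eq_zero_iff] at hm
        have hdec : ((L.projectionOnto L' hL m : M) +
            (L'.projectionOnto L hL.symm m : M)) = m :=
          Submodule.projection_add_projection_eq_self hL m
        have hm2 : m = ((L'.projectionOnto L hL.symm m : M)) +
            ((L.projectionOnto L' hL m : M)) := by
          rw [add_comm] at hdec; exact hdec.symm
        rw [hm2]
        exact Submodule.add_mem_sup (L'.projectionOnto L hL.symm m).2
          ⟨hm, (L.projectionOnto L' hL m).2⟩
      · intro m hm
        obtain ⟨u, hu, v, hv, huv⟩ := Submodule.mem_sup.mp hm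
        rw [LinearMap.mem_ker, LinearMap.comp_apply, LinearMap.comp_apply, Submodule.coe_subtype]
        have h2 : L.projectionOnto L' hL m = ⟨v, hv.2⟩ := by
          rw [← huv, map_add, Submodule.projectionOnto_apply_of_mem_right hL hu,
            Submodule.projectionOnto_apply_left hL ⟨v, hv.2⟩, zero_add]
        rw [h2]
        exact Submodule.projectionOnto_apply_of_mem_right hK.symm hv.1
  obtain ⟨f, hfsurj, hker⟩ := hmaps
  have hWsummand : IsDirectSummand R (L' ⊔ (K ⊓ L)) := by
    apply hD2
    refine ⟨K', ⟨K, hK.symm⟩, ⟨?_⟩⟩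
    rw [← hker]
    exact f.quotKerEquivOfSurjective hfsurj
  obtain ⟨C, hC⟩ := hWsummand
  -- lattice computations; a := K ⊓ L, b := L'
  have habot : (K ⊓ L) ⊓ L' = ⊥ := by
    rw [← le_bot_iff, ← hL.inf_eq_bot]
    exact inf_le_inf_right L' inf_le_right
  have h1 : (L' ⊔ K ⊓ L) ⊓ C = ⊥ := hC.inf_eq_bot
  have hAbot : (K ⊓ L) ⊓ (L' ⊔ C) = ⊥ := by
    have hmod : (L' ⊔ C) ⊓ (L' ⊔ K ⊓ L) = L' := by
      rw [sup_inf_assoc_of_le C (le_sup_left : L' ≤ L' ⊔ K ⊓ L), inf_comm C (L' ⊔ K ⊓ L), h1,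
        sup_bot_eq]
    have ht : (K ⊓ L) ⊓ (L' ⊔ C) ≤ L' :=
      le_trans (le_inf inf_le_right (le_trans inf_le_left le_sup_right)) hmod.le
    rw [← le_bot_iff, ← habot]
    exact le_inf inf_le_left ht
  have hLdec : (K ⊓ L) ⊔ ((L' ⊔ C) ⊓ L) = L := by
    have htop : (K ⊓ L) ⊔ (L' ⊔ C) = ⊤ := by
      rw [← sup_assoc, sup_comm (K ⊓ L) L', hC.sup_eq_top]
    have := sup_inf_assoc_of_le (L' ⊔ C) (inf_le_right : K ⊓ L ≤ L)
    rw [← this, htop, top_inf_eq]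
  refine ⟨((L' ⊔ C) ⊓ L) ⊔ L', IsCompl.of_eq ?_ ?_⟩
  · -- (K ⊓ L) ⊓ (((L' ⊔ C) ⊓ L) ⊔ L') = ⊥
    have hXL : (((L' ⊔ C) ⊓ L) ⊔ L') ⊓ L = (L' ⊔ C) ⊓ L := by
      rw [sup_inf_assoc_of_le L' (inf_le_right : (L' ⊔ C) ⊓ L ≤ L),
        inf_comm L' L, hL.inf_eq_bot, sup_bot_eq]
    rw [← le_bot_iff, ← hAbot]
    refine le_inf inf_le_left ?_
    calc (K ⊓ L) ⊓ (((L' ⊔ C) ⊓ L) ⊔ L')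
        ≤ (((L' ⊔ C) ⊓ L) ⊔ L') ⊓ L := le_inf inf_le_right (le_trans inf_le_left inf_le_right)
      _ = (L' ⊔ C) ⊓ L := hXL
      _ ≤ L' ⊔ C := inf_le_left
  · -- (K ⊓ L) ⊔ (((L' ⊔ C) ⊓ L) ⊔ L') = ⊤
    rw [← sup_assoc, hLdec, hL.sup_eq_top]

end Aux

theorem stmt1 {R : Type v} [Ring R] {M : Type u} [AddCommGroup M] [Module R M]
    (hH : HSupplemented R M) (hD2 : CondD2 R M) :
    ∀ D : Submodule R M, IsDirectSummand R D → HSupplemented R ↥D := by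
  intro N hN
  rw [hsupp_iff_beta] at hH ⊢
  intro X
  set A := X.map N.subtype with hA
  have hAN : A ≤ N := Submodule.map_subtype_le N X
  obtain ⟨E, hEsummand, hbeta⟩ := hH A
  obtain ⟨E', hE⟩ := hEsummand
  have hAE' : A ⊔ E' = ⊤ := (hbeta E').mpr hE.sup_eq_top
  have hNE' : N ⊔ E' = ⊤ := top_unique (hAE' ▸ sup_le_sup_right hAN E')
  obtain ⟨C, hC⟩ := condD2_to_condD3 hD2 N E' hN ⟨E, hE.symm⟩ hNE'
  have hFC_bot : (N ⊓ E') ⊓ C = ⊥ := hC.inf_eq_bot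
  have hFC_top : (N ⊓ E') ⊔ C = ⊤ := hC.sup_eq_top
  -- F' := E ⊔ (E' ⊓ C) is a complement of F := N ⊓ E' containing E
  have hEF'1 : (E' ⊓ C) ⊔ (N ⊓ E') = E' := by
    rw [inf_sup_assoc_of_le C (inf_le_right : N ⊓ E' ≤ E'), sup_comm C (N ⊓ E'), hFC_top,
      inf_top_eq]
  have hFF'_top : (N ⊓ E') ⊔ (E ⊔ (E' ⊓ C)) = ⊤ := by
    rw [sup_comm (N ⊓ E') (E ⊔ (E' ⊓ C)), sup_assoc, hEF'1, hE.sup_eq_top]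
  have h5 : E' ⊓ (E ⊔ (E' ⊓ C)) = E' ⊓ C := by
    rw [← inf_sup_assoc_of_le E (inf_le_left : E' ⊓ C ≤ E'), inf_comm E' E, hE.inf_eq_bot,
      bot_sup_eq]
  have hFF'_bot : (N ⊓ E') ⊓ (E ⊔ (E' ⊓ C)) = ⊥ := by
    rw [inf_assoc, h5, ← inf_assoc, hFC_bot]
  have hEleF' : E ≤ E ⊔ (E' ⊓ C) := le_sup_left
  -- decomposition of N
  have hND : (N ⊓ E') ⊔ ((E ⊔ (E' ⊓ C)) ⊓ N) = N := by
    rw [← sup_inf_assoc_of_le (E ⊔ (E' ⊓ C)) (inf_le_left : N ⊓ E' ≤ N), hFF'_top, top_inf_eq]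
  -- D and its complement inside N
  set D : Submodule R ↥N := (N ⊓ (E ⊔ (E' ⊓ C))).comap N.subtype with hD
  set Fc : Submodule R ↥N := (N ⊓ E').comap N.subtype with hFc
  have hmapD : D.map N.subtype = N ⊓ (E ⊔ (E' ⊓ C)) := by
    rw [hD, Submodule.map_comap_subtype, ← inf_assoc, inf_idem]
  have hmapFc : Fc.map N.subtype = N ⊓ E' := by
    rw [hFc, Submodule.map_comap_subtype, ← inf_assoc, inf_idem]
  have hmap_top : ∀ P Z : Submodule R ↥N, P ⊔ Z = ⊤ ↔ P.map N.subtype ⊔ Z.map N.subtype = N := by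
    intro P Z
    constructor
    · intro h
      rw [← Submodule.map_sup, h, Submodule.map_subtype_top]
    · intro h
      apply Submodule.map_injective_of_injective N.injective_subtype
      rwa [Submodule.map_sup, Submodule.map_subtype_top]
  have hDsummand : IsDirectSummand R D := by
    refine ⟨Fc, IsCompl.of_eq ?_ ?_⟩
    · rw [hD, hFc, ← Submodule.comap_inf]
      have hbot : (N ⊓ (E ⊔ (E' ⊓ C))) ⊓ (N ⊓ E') = ⊥ := by
        rw [← le_bot_iff, ← hFF'_bot]
        exact le_inf inf_le_right (le_trans inf_le_left inf_le_right)
      rw [hbot, Submodule.comap_bot, Submodule.ker_subtype]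
    · rw [hmap_top, hmapD, hmapFc, sup_comm, inf_comm N (E ⊔ E' ⊓ C)]
      exact hND
  refine ⟨D, hDsummand, fun Z => ?_⟩
  rw [hmap_top X Z, hmap_top D Z, hmapD, ← hA]
  set Z' := Z.map N.subtype with hZ'
  have hZ'N : Z' ≤ N := Submodule.map_subtype_le N Z
  constructor
  · intro h
    have hle1 : (N ⊓ E') ⊔ (E ⊔ (E' ⊓ C)) ≤ A ⊔ (Z' ⊔ (E ⊔ (E' ⊓ C))) :=
      sup_le (le_trans inf_le_left (le_trans h.ge (sup_le_sup_left le_sup_left A)))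
        (le_trans le_sup_right le_sup_right)
    have h1 : A ⊔ (Z' ⊔ (E ⊔ (E' ⊓ C))) = ⊤ := top_unique (le_trans hFF'_top.ge hle1)
    have h2 : E ⊔ (Z' ⊔ (E ⊔ (E' ⊓ C))) = ⊤ := (hbeta _).mp h1
    have h3 : Z' ⊔ (E ⊔ (E' ⊓ C)) = ⊤ :=
      top_unique (le_trans h2.ge (sup_le (le_trans hEleF' le_sup_right) le_rfl))
    have h4 : (Z' ⊔ (E ⊔ (E' ⊓ C))) ⊓ N = Z' ⊔ ((E ⊔ (E' ⊓ C)) ⊓ N) :=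
      sup_inf_assoc_of_le _ hZ'N
    rw [h3, top_inf_eq] at h4
    rw [inf_comm N (E ⊔ (E' ⊓ C)), sup_comm ((E ⊔ (E' ⊓ C)) ⊓ N) Z']
    exact h4.symm
  · intro h
    have hle2 : (N ⊓ E') ⊔ (E ⊔ (E' ⊓ C)) ≤ Z' ⊔ (E ⊔ (E' ⊓ C)) :=
      sup_le (le_trans inf_le_left (le_trans h.ge
        (sup_le (le_trans inf_le_right le_sup_right) le_sup_left))) le_sup_right
    have g1 : Z' ⊔ (E ⊔ (E' ⊓ C)) = ⊤ := top_unique (le_trans hFF'_top.ge hle2)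
    have g2 : E ⊔ (Z' ⊔ (E' ⊓ C)) = ⊤ := by rw [sup_left_comm]; exact g1
    have g3 : A ⊔ (Z' ⊔ (E' ⊓ C)) = ⊤ := (hbeta _).mpr g2
    rw [← sup_assoc] at g3
    have hle3 : A ⊔ Z' ≤ N := sup_le hAN hZ'N
    have hmod2 : ((A ⊔ Z') ⊔ (E' ⊓ C)) ⊓ N = (A ⊔ Z') ⊔ ((E' ⊓ C) ⊓ N) :=
      sup_inf_assoc_of_le _ hle3
    have hbot2 : (E' ⊓ C) ⊓ N = ⊥ := by
      rw [← le_bot_iff, ← hFC_bot]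
      exact le_inf (le_inf inf_le_right (le_trans inf_le_left inf_le_left))
        (le_trans inf_le_left inf_le_right)
    rw [g3, top_inf_eq, hbot2, sup_bot_eq] at hmod2
    exact hmod2.symm
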